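/- Let F be a field of characteristic 2 and D a finite-dimensional central division algebra over F carrying an F-linear involution. Then u⁺(D) ≤ u(D). -/

import Mathlib

noncomputable section GenQuadForm

open scoped TensorProduct

/-- An `F`-linear involution (of the first kind) on the `F`-algebra `D`. -/
def IsFInvolution (F : Type*) {D : Type*} [Field F] [Ring D] [Algebra F D]
    (θ : D → D) : Prop :=
  (∀ a b : D, θ (a + b) = θ a + θ b) ∧
  (∀ (c : F) (a : D), θ (c • a) = c • θ a) ∧
  (∀ a b : D, θ (a * b) = θ b * θ a) ∧
  (∀ a : D, θ (θ a) = a)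

/-- `Sym(D,θ)`, the set of symmetric elements. -/
def SymSet {D : Type*} (θ : D → D) : Set D := {a | θ a = a}

/-- `Alt(D,θ) = {a - θ a | a ∈ D}`, the set of alternating elements. -/
def AltSet {D : Type*} [Ring D] (θ : D → D) : Set D := {a | ∃ b : D, a = b - θ b}

/-- The right scalar multiple of a vector `x ∈ Dⁿ` by `d ∈ D`. -/
def rsmul {D : Type*} [Ring D] {n : ℕ} (x : Fin n → D) (d : D) : Fin n → D :=
  fun i => x i * d

/-- `h` is a hermitian form on the (right) `D`-vector space `Dⁿ` with respect to the
involution `θ`: bi-additive, sesquilinear and `θ`-symmetric. (Every `n`-dimensional right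
`D`-vector space is isomorphic to `Dⁿ`.) -/
def IsHermForm {D : Type*} [Ring D] (θ : D → D) (n : ℕ)
    (h : (Fin n → D) → (Fin n → D) → D) : Prop :=
  (∀ x x' y : Fin n → D, h (x + x') y = h x y + h x' y) ∧
  (∀ x y y' : Fin n → D, h x (y + y') = h x y + h x y') ∧
  (∀ (x y : Fin n → D) (d₁ d₂ : D), h (rsmul x d₁) (rsmul y d₂) = θ d₁ * h x y * d₂) ∧
  (∀ x y : Fin n → D, h y x = θ (h x y))

/-- A hermitian form is anisotropic if `h x x = 0` only for `x = 0`. -/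
def HermAnisotropic {D : Type*} [Ring D] (n : ℕ)
    (h : (Fin n → D) → (Fin n → D) → D) : Prop :=
  ∀ x : Fin n → D, h x x = 0 → x = 0

/-- A hermitian form is alternating if `h x x ∈ Alt(D,θ)` for all `x`. -/
def HermAlternating {D : Type*} [Ring D] (θ : D → D) (n : ℕ)
    (h : (Fin n → D) → (Fin n → D) → D) : Prop :=
  ∀ x : Fin n → D, h x x ∈ AltSet θ

/-- A hermitian form is direct if `h x x ∉ Alt(D,θ)` for all `x ≠ 0`. -/
def HermDirect {D : Type*} [Ring D] (θ : D → D) (n : ℕ)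
    (h : (Fin n → D) → (Fin n → D) → D) : Prop :=
  ∀ x : Fin n → D, x ≠ 0 → h x x ∉ AltSet θ

/-- A hermitian form is nondegenerate if its radical is trivial. -/
def HermNondegenerate {D : Type*} [Ring D] (n : ℕ)
    (h : (Fin n → D) → (Fin n → D) → D) : Prop :=
  ∀ x : Fin n → D, (∀ y : Fin n → D, h x y = 0) → x = 0

/-- The diagonal hermitian form `⟨a₁,…,aₙ⟩ʰ` over `(D,θ)`. -/
def diagHerm {D : Type*} [Ring D] (θ : D → D) {n : ℕ} (a : Fin n → D) :
    (Fin n → D) → (Fin n → D) → D :=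
  fun x y => ∑ i, θ (x i) * a i * y i

/-- `q` (a representative function of a map `Dⁿ → D/Alt(D,θ)`) is a generalised quadratic form
over `(D,θ)` with polar form `h`: all defining identities are required modulo `Alt(D,θ)`. -/
def IsQuadForm {D : Type*} [Ring D] (θ : D → D) (n : ℕ)
    (q : (Fin n → D) → D) (h : (Fin n → D) → (Fin n → D) → D) : Prop :=
  IsHermForm θ n h ∧
  (∀ (x : Fin n → D) (d : D), q (rsmul x d) - θ d * q x * d ∈ AltSet θ) ∧
  (∀ x y : Fin n → D, q (x + y) - q x - q y - h x y ∈ AltSet θ)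

/-- A quadratic form over `(D,θ)` is isotropic if it vanishes modulo `Alt(D,θ)` at some
nonzero vector. -/
def QuadIsotropic {D : Type*} [Ring D] (θ : D → D) (n : ℕ)
    (q : (Fin n → D) → D) : Prop :=
  ∃ x : Fin n → D, x ≠ 0 ∧ q x ∈ AltSet θ

/-- A quadratic form over `(D,θ)` is anisotropic if it is not isotropic. -/
def QuadAnisotropic {D : Type*} [Ring D] (θ : D → D) (n : ℕ)
    (q : (Fin n → D) → D) : Prop :=
  ∀ x : Fin n → D, x ≠ 0 → q x ∉ AltSet θ

/-- A quadratic form over `(D,θ)` represents `a ∈ D` if its value at some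
nonzero vector is `a + Alt(D,θ)`. -/
def QuadRepresents {D : Type*} [Ring D] (θ : D → D) (n : ℕ)
    (q : (Fin n → D) → D) (a : D) : Prop :=
  ∃ x : Fin n → D, x ≠ 0 ∧ q x - a ∈ AltSet θ

/-- A quadratic form over `(D,θ)` is totally singular if its polar form is identically zero. -/
def QuadTotallySingular {D : Type*} [Ring D] (θ : D → D) (n : ℕ)
    (q : (Fin n → D) → D) : Prop :=
  IsQuadForm θ n q (fun _ _ => 0)

/-- A quadratic form over `(D,θ)` is nonsingular if its polar form is nondegenerate. -/
def QuadNonsingular {D : Type*} [Ring D] (θ : D → D) (n : ℕ)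
    (q : (Fin n → D) → D) : Prop :=
  ∃ h, IsQuadForm θ n q h ∧ HermNondegenerate n h

/-- The diagonal quadratic form `⟨a₁,…,aₙ⟩` over `(D,θ)`. -/
def diagQuad {D : Type*} [Ring D] (θ : D → D) {n : ℕ} (a : Fin n → D) :
    (Fin n → D) → D :=
  fun x => ∑ i, θ (x i) * a i * x i

/-- `u⁺(D)`: the supremum of the dimensions of anisotropic hermitian forms over `(D,θ)`. -/
def uHermPlus {D : Type*} [DivisionRing D] (θ : D → D) : ℕ∞ :=
  ⨆ n ∈ {n : ℕ | ∃ h, IsHermForm θ n h ∧ HermAnisotropic n h}, (n : ℕ∞)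

/-- `u⁺_d(D)`: the supremum of the dimensions of direct hermitian forms over `(D,θ)`. -/
def uHermPlusDirect {D : Type*} [DivisionRing D] (θ : D → D) : ℕ∞ :=
  ⨆ n ∈ {n : ℕ | ∃ h, IsHermForm θ n h ∧ HermDirect θ n h}, (n : ℕ∞)

/-- `u⁻(D)`: the supremum of the dimensions of anisotropic alternating hermitian forms
over `(D,θ)`. -/
def uHermMinus {D : Type*} [DivisionRing D] (θ : D → D) : ℕ∞ :=
  ⨆ n ∈ {n : ℕ | ∃ h, IsHermForm θ n h ∧ HermAnisotropic n h ∧ HermAlternating θ n h},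
    (n : ℕ∞)

/-- `u(D)`: the supremum of the dimensions of anisotropic (generalised) quadratic forms
over `(D,θ)`. -/
def uQuad {D : Type*} [DivisionRing D] (θ : D → D) : ℕ∞ :=
  ⨆ n ∈ {n : ℕ | ∃ q h, IsQuadForm θ n q h ∧ QuadAnisotropic θ n q}, (n : ℕ∞)

/-- `ũ(D)`: the supremum of the dimensions of anisotropic nonsingular quadratic forms
over `(D,θ)`. -/
def uQuadTilde {D : Type*} [DivisionRing D] (θ : D → D) : ℕ∞ :=
  ⨆ n ∈ {n : ℕ | ∃ q, QuadNonsingular θ n q ∧ QuadAnisotropic θ n q}, (n : ℕ∞)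

/-- The polar form of a quadratic form over a field. -/
def polarF {F : Type*} [Field F] {n : ℕ} (q : (Fin n → F) → F) :
    (Fin n → F) → (Fin n → F) → F :=
  fun x y => q (x + y) - q x - q y

/-- A quadratic form over the field `F` (on `Fⁿ`): `q (a • x) = a² q x` and the polar
form is bilinear. -/
def IsQuadFormField {F : Type*} [Field F] (n : ℕ) (q : (Fin n → F) → F) : Prop :=
  (∀ (a : F) (x : Fin n → F), q (a • x) = a ^ 2 * q x) ∧
  (∀ x x' y : Fin n → F, polarF q (x + x') y = polarF q x y + polarF q x' y) ∧
  (∀ (a : F) (x y : Fin n → F), polarF q (a • x) y = a * polarF q x y)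

def QFieldNonsingular {F : Type*} [Field F] (n : ℕ) (q : (Fin n → F) → F) : Prop :=
  ∀ x : Fin n → F, (∀ y : Fin n → F, polarF q x y = 0) → x = 0

def QFieldTotallySingular {F : Type*} [Field F] (n : ℕ) (q : (Fin n → F) → F) : Prop :=
  ∀ x y : Fin n → F, q (x + y) = q x + q y

def QFieldAnisotropic {F : Type*} [Field F] (n : ℕ) (q : (Fin n → F) → F) : Prop :=
  ∀ x : Fin n → F, q x = 0 → x = 0

/-- `ũ(F)`: the supremum of the dimensions of anisotropic nonsingular quadratic forms
over the field `F`. -/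
def uTildeField (F : Type*) [Field F] : ℕ∞ :=
  ⨆ n ∈ {n : ℕ | ∃ q : (Fin n → F) → F,
      IsQuadFormField n q ∧ QFieldNonsingular n q ∧ QFieldAnisotropic n q}, (n : ℕ∞)

/-- The subfield `F² = {a² : a ∈ F}` of a field of characteristic `2`. -/
def sqSubfield (F : Type*) [Field F] [CharP F 2] : Subfield F :=
  (frobenius F 2).fieldRange

/-- `[F : F²]` as an element of `ℕ ∪ {∞}`. -/
def sqIndex (F : Type*) [Field F] [CharP F 2] : ℕ∞ :=
  Cardinal.toENat (Module.rank (sqSubfield F) F)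

/-- `℘(F) = {a² + a : a ∈ F}`. -/
def wpSet (F : Type*) [Field F] : Set F := {a | ∃ b : F, a = b ^ 2 + b}



/-! ### Auxiliary development -/

open MulOpposite

/-- Bundled hypotheses on the involution and the characteristic. -/
structure InvData {D : Type*} [DivisionRing D] (θ : D → D) : Prop where
  ha : ∀ a b : D, θ (a + b) = θ a + θ b
  hm : ∀ a b : D, θ (a * b) = θ b * θ a
  hi : ∀ a : D, θ (θ a) = a
  h2 : (2 : D) = 0

namespace InvData
variable {D : Type*} [DivisionRing D] {θ : D → D} (hd : InvData θ)
include hd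

lemma neg_eq (x : D) : -x = x := by
  have : x + x = 0 := by rw [← two_mul, hd.h2, zero_mul]
  exact neg_eq_of_add_eq_zero_left this

lemma sub_eq_add (a b : D) : a - b = a + b := by rw [sub_eq_add_neg, hd.neg_eq]

lemma add_self (x : D) : x + x = 0 := by rw [← two_mul, hd.h2, zero_mul]

lemma t0 : θ 0 = 0 := by
  have h := hd.ha 0 0
  rw [add_zero] at h
  exact (left_eq_add.mp h)

lemma t1 : θ 1 = 1 := by
  have h : θ 1 = θ 1 * θ 1 := by rw [← hd.hm, one_mul]
  have hne : θ 1 ≠ 0 := by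
    intro h0
    have := hd.hi 1
    rw [h0, hd.t0] at this
    exact one_ne_zero this.symm
  exact mul_left_cancel₀ hne (by rw [← h, mul_one])

lemma tneg (a : D) : θ (-a) = - θ a := by
  have h := hd.ha a (-a)
  rw [add_neg_cancel, hd.t0] at h
  exact (eq_neg_of_add_eq_zero_right h.symm)

lemma tsub (a b : D) : θ (a - b) = θ a - θ b := by
  rw [sub_eq_add_neg, hd.ha, hd.tneg, sub_eq_add_neg]

lemma tsum {ι : Type*} (s : Finset ι) (f : ι → D) :
    θ (∑ i ∈ s, f i) = ∑ i ∈ s, θ (f i) :=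
  map_sum (AddMonoidHom.mk' θ hd.ha) f s

lemma alt_zero : (0 : D) ∈ AltSet θ := ⟨0, by rw [hd.t0, sub_zero]⟩

lemma alt_add {a b : D} (haa : a ∈ AltSet θ) (hbb : b ∈ AltSet θ) :
    a + b ∈ AltSet θ := by
  obtain ⟨c, rfl⟩ := haa; obtain ⟨e, rfl⟩ := hbb
  exact ⟨c + e, by rw [hd.ha, add_sub_add_comm]⟩

lemma alt_sum {ι : Type*} (s : Finset ι) (f : ι → D) (h : ∀ i ∈ s, f i ∈ AltSet θ) :
    (∑ i ∈ s, f i) ∈ AltSet θ :=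
  Finset.sum_induction f (· ∈ AltSet θ) (fun _ _ => hd.alt_add) hd.alt_zero h

omit hd in
lemma alt_sub_theta (a : D) : a - θ a ∈ AltSet θ := ⟨a, rfl⟩

lemma alt_conj {a : D} (d : D) (haa : a ∈ AltSet θ) : θ d * a * d ∈ AltSet θ := by
  obtain ⟨b, rfl⟩ := haa
  refine ⟨θ d * b * d, ?_⟩
  rw [mul_sub, sub_mul, hd.hm, hd.hm, hd.hi, mul_assoc, mul_assoc]

lemma theta_of_alt {a : D} (haa : a ∈ AltSet θ) : θ a = a := by
  obtain ⟨b, rfl⟩ := haa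
  rw [hd.tsub, hd.hi, hd.sub_eq_add, hd.sub_eq_add, add_comm]

end InvData

section ModuleInfra

variable {D : Type*} [DivisionRing D]

/-- `D` as a right module over itself, written as a `Dᵐᵒᵖ`-module. -/
def opSelfEquiv (D : Type*) [DivisionRing D] : D ≃ₗ[Dᵐᵒᵖ] Dᵐᵒᵖ where
  toFun := op
  map_add' := by simp
  map_smul' := by intro r x; simp [op_smul_eq_mul, smul_eq_mul]
  invFun := unop
  left_inv := fun _ => rfl
  right_inv := fun _ => rfl

noncomputable def piBasis (D : Type*) [DivisionRing D] (n : ℕ) :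
    Module.Basis (Fin n) Dᵐᵒᵖ (Fin n → D) :=
  Module.Basis.ofEquivFun (LinearEquiv.piCongrRight (fun _ => opSelfEquiv D))

lemma finrank_pi_op (n : ℕ) : Module.finrank Dᵐᵒᵖ (Fin n → D) = n := by
  rw [Module.finrank_eq_card_basis (piBasis D n), Fintype.card_fin]

instance piFinite (n : ℕ) : Module.Finite Dᵐᵒᵖ (Fin n → D) :=
  Module.Finite.of_basis (piBasis D n)

lemma smul_eq_rsmul {n : ℕ} (c : Dᵐᵒᵖ) (x : Fin n → D) :
    c • x = rsmul x (unop c) := by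
  funext i
  simp [rsmul, MulOpposite.smul_eq_mul_unop]

/-- Independence of basis vectors of a submodule, in `rsmul` form. -/
lemma indep_of_basis {n : ℕ} (U : Submodule Dᵐᵒᵖ (Fin n → D)) {r : ℕ}
    (b : Module.Basis (Fin r) Dᵐᵒᵖ U) (c : Fin r → D)
    (hc : ∑ j, rsmul (b j : Fin n → D) (c j) = 0) : ∀ j, c j = 0 := by
  intro j
  have hsum : ∑ j, (op (c j)) • (b j) = (0 : U) := by
    apply Subtype.ext
    push_cast
    rw [← hc]
    refine Finset.sum_congr rfl fun j _ => ?_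
    rw [smul_eq_rsmul, unop_op]
  have := Fintype.linearIndependent_iff.mp b.linearIndependent (fun j => op (c j)) hsum j
  simpa using this

/-- Splitting a sum over `Fin n` when `k + m = n`. -/
lemma sum_split {M : Type*} [AddCommMonoid M] {n k m : ℕ} (hkm : k + m = n) (f : Fin n → M) :
    ∑ i, f i = (∑ j : Fin k, f ⟨j.val, by omega⟩) + ∑ j : Fin m, f ⟨k + j.val, by omega⟩ := by
  subst hkm
  rw [Fin.sum_univ_add]
  congr 1

end ModuleInfra

section HermInfra

variable {D : Type*} [DivisionRing D] {θ : D → D} {n : ℕ}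
  {h : (Fin n → D) → (Fin n → D) → D}

lemma rsmul_one (x : Fin n → D) : rsmul x 1 = x := funext fun _ => mul_one _
lemma rsmul_zero (x : Fin n → D) : rsmul x (0 : D) = 0 := funext fun _ => mul_zero _
lemma rsmul_rsmul (x : Fin n → D) (a b : D) : rsmul (rsmul x a) b = rsmul x (a * b) :=
  funext fun _ => mul_assoc _ _ _

lemma h0l (hh : IsHermForm θ n h) (y : Fin n → D) : h 0 y = 0 := by
  have := hh.1 0 0 y
  rw [add_zero] at this
  exact (left_eq_add.mp this)

lemma h0r (hh : IsHermForm θ n h) (x : Fin n → D) : h x 0 = 0 := by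
  have := hh.2.1 x 0 0
  rw [add_zero] at this
  exact (left_eq_add.mp this)

lemma hsl (hd : InvData θ) (hh : IsHermForm θ n h) (x y : Fin n → D) (d : D) :
    h (rsmul x d) y = θ d * h x y := by
  have := hh.2.2.1 x y d 1
  rwa [rsmul_one, mul_one] at this

lemma hsr (hd : InvData θ) (hh : IsHermForm θ n h) (x y : Fin n → D) (d : D) :
    h x (rsmul y d) = h x y * d := by
  have := hh.2.2.1 x y 1 d
  rwa [rsmul_one, hd.t1, one_mul] at this

lemma hsuml (hh : IsHermForm θ n h) {ι : Type*} (s : Finset ι) (f : ι → Fin n → D)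
    (y : Fin n → D) : h (∑ i ∈ s, f i) y = ∑ i ∈ s, h (f i) y :=
  map_sum (AddMonoidHom.mk' (fun x => h x y) (fun a b => hh.1 a b y)) f s

lemma hsumr (hh : IsHermForm θ n h) {ι : Type*} (s : Finset ι) (x : Fin n → D)
    (f : ι → Fin n → D) : h x (∑ i ∈ s, f i) = ∑ i ∈ s, h x (f i) :=
  map_sum (AddMonoidHom.mk' (fun y => h x y) (fun a b => hh.2.1 x a b)) f s

/-- Expansion of a hermitian form on linear combinations. -/
lemma h_sum_pair (hd : InvData θ) (hh : IsHermForm θ n h) {r : ℕ}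
    (w : Fin r → Fin n → D) (c e : Fin r → D) :
    h (∑ j, rsmul (w j) (c j)) (∑ j, rsmul (w j) (e j))
      = ∑ p, ∑ s, θ (c p) * h (w p) (w s) * e s := by
  rw [hsuml hh]
  refine Finset.sum_congr rfl fun p _ => ?_
  rw [hsumr hh]
  refine Finset.sum_congr rfl fun s _ => ?_
  rw [hh.2.2.1]

/-- The submodule `W = {x | h(x,x) ∈ Alt}`. -/
def Wsub (hd : InvData θ) (hh : IsHermForm θ n h) : Submodule Dᵐᵒᵖ (Fin n → D) where
  carrier := {x | h x x ∈ AltSet θ}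
  zero_mem' := by
    show h 0 0 ∈ AltSet θ
    rw [h0l hh]
    exact hd.alt_zero
  add_mem' := by
    intro x y hx hy
    show h (x + y) (x + y) ∈ AltSet θ
    have hexp : h (x + y) (x + y) = (h x x + h y y) + (h x y + h y x) := by
      rw [hh.1, hh.2.1, hh.2.1]; abel
    have hxy : h x y + θ (h x y) ∈ AltSet θ := by
      rw [← hd.sub_eq_add]; exact InvData.alt_sub_theta _
    rw [hexp, hh.2.2.2 x y]
    exact hd.alt_add (hd.alt_add hx hy) hxy
  smul_mem' := by
    intro c x hx
    show h (c • x) (c • x) ∈ AltSet θ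
    rw [smul_eq_rsmul, hh.2.2.1]
    exact hd.alt_conj _ hx

/-- The orthogonal complement of `W`. -/
def Wperp (hd : InvData θ) (hh : IsHermForm θ n h) : Submodule Dᵐᵒᵖ (Fin n → D) where
  carrier := {x | ∀ w, h w w ∈ AltSet θ → h w x = 0}
  zero_mem' := fun w _ => h0r hh w
  add_mem' := by
    intro x y hx hy w hw
    rw [hh.2.1, hx w hw, hy w hw, add_zero]
  smul_mem' := by
    intro c x hx w hw
    rw [smul_eq_rsmul, hsr hd hh, hx w hw, zero_mul]

lemma mem_Wsub (hd : InvData θ) (hh : IsHermForm θ n h) (x : Fin n → D) :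
    x ∈ Wsub hd hh ↔ h x x ∈ AltSet θ := Iff.rfl

lemma mem_Wperp (hd : InvData θ) (hh : IsHermForm θ n h) (x : Fin n → D) :
    x ∈ Wperp hd hh ↔ ∀ w, h w w ∈ AltSet θ → h w x = 0 := Iff.rfl

lemma dim_eq (hd : InvData θ) (hh : IsHermForm θ n h) (han : HermAnisotropic n h) :
    Module.finrank Dᵐᵒᵖ (Wsub hd hh) + Module.finrank Dᵐᵒᵖ (Wperp hd hh) = n := by
  classical
  set W := Wsub hd hh with hW
  set P := Wperp hd hh with hP
  have hinf : W ⊓ P = ⊥ := by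
    rw [Submodule.eq_bot_iff]
    rintro x ⟨hxW, hxP⟩
    exact han x (hxP x hxW)
  have hle : Module.finrank Dᵐᵒᵖ W + Module.finrank Dᵐᵒᵖ P ≤ n := by
    have hh1 := Submodule.finrank_sup_add_finrank_inf_eq W P
    rw [hinf, finrank_bot, add_zero] at hh1
    rw [← hh1]
    have hh2 := Submodule.finrank_le (W ⊔ P)
    rwa [finrank_pi_op] at hh2
  have hge : n ≤ Module.finrank Dᵐᵒᵖ W + Module.finrank Dᵐᵒᵖ P := by
    set k := Module.finrank Dᵐᵒᵖ W with hk
    let b : Module.Basis (Fin k) Dᵐᵒᵖ W := Module.finBasis _ _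
    let Φ : (Fin n → D) →ₗ[Dᵐᵒᵖ] (Fin k → D) :=
      { toFun := fun x i => h ((b i : W) : Fin n → D) x
        map_add' := fun x y => funext fun i => hh.2.1 _ x y
        map_smul' := fun c x => funext fun i => by
          simp only [RingHom.id_apply, Pi.smul_apply]
          rw [smul_eq_rsmul, hsr hd hh, MulOpposite.smul_eq_mul_unop] }
    have hker : LinearMap.ker Φ ≤ P := by
      intro x hx
      rw [LinearMap.mem_ker] at hx
      intro w hw
      have hwW : (⟨w, hw⟩ : W) ∈ (⊤ : Submodule Dᵐᵒᵖ W) := Submodule.mem_top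
      rw [← b.span_eq] at hwW
      have key : ∀ (u : W), u ∈ Submodule.span Dᵐᵒᵖ (Set.range b) →
          h ((u : W) : Fin n → D) x = 0 := by
        intro u hu
        induction hu using Submodule.span_induction with
        | mem u hu =>
          obtain ⟨i, rfl⟩ := hu
          exact congrFun hx i
        | zero => exact h0l hh x
        | add u v _ _ hu hv => rw [Submodule.coe_add, hh.1, hu, hv, add_zero]
        | smul c u _ hu =>
          rw [Submodule.coe_smul, smul_eq_rsmul, hsl hd hh, hu, mul_zero]
      exact key ⟨w, hw⟩ hwW
    have hrn := LinearMap.finrank_range_add_finrank_ker Φ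
    rw [finrank_pi_op] at hrn
    have h1 : Module.finrank Dᵐᵒᵖ (LinearMap.range Φ) ≤ k := by
      have := Submodule.finrank_le (LinearMap.range Φ)
      rwa [finrank_pi_op] at this
    have h2 : Module.finrank Dᵐᵒᵖ (LinearMap.ker Φ) ≤ Module.finrank Dᵐᵒᵖ P :=
      Submodule.finrank_mono hker
    omega
  omega

end HermInfra

section Msum

variable {D : Type*} [DivisionRing D]

/-- The sesquilinear expression attached to a matrix. -/
def msum (θ : D → D) {n : ℕ} (M : Fin n → Fin n → D) (x y : Fin n → D) : D :=
  ∑ i, ∑ j, θ (x i) * M i j * y j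

variable {θ : D → D} {n : ℕ}

lemma msum_smul (hd : InvData θ) (M : Fin n → Fin n → D) (x y : Fin n → D) (d₁ d₂ : D) :
    msum θ M (rsmul x d₁) (rsmul y d₂) = θ d₁ * msum θ M x y * d₂ := by
  unfold msum
  rw [Finset.mul_sum, Finset.sum_mul]
  refine Finset.sum_congr rfl fun i _ => ?_
  rw [Finset.mul_sum, Finset.sum_mul]
  refine Finset.sum_congr rfl fun j _ => ?_
  show θ (x i * d₁) * M i j * (y j * d₂) = θ d₁ * (θ (x i) * M i j * y j) * d₂
  rw [hd.hm]
  noncomm_ring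

lemma msum_addl (hd : InvData θ) (M : Fin n → Fin n → D) (x x' y : Fin n → D) :
    msum θ M (x + x') y = msum θ M x y + msum θ M x' y := by
  unfold msum
  rw [← Finset.sum_add_distrib]
  refine Finset.sum_congr rfl fun i _ => ?_
  rw [← Finset.sum_add_distrib]
  refine Finset.sum_congr rfl fun j _ => ?_
  show θ (x i + x' i) * M i j * y j = _
  rw [hd.ha, add_mul, add_mul]

lemma msum_addr (M : Fin n → Fin n → D) (x y y' : Fin n → D) :
    msum θ M x (y + y') = msum θ M x y + msum θ M x y' := by
  unfold msum
  rw [← Finset.sum_add_distrib]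
  refine Finset.sum_congr rfl fun i _ => ?_
  rw [← Finset.sum_add_distrib]
  refine Finset.sum_congr rfl fun j _ => ?_
  show θ (x i) * M i j * (y j + y' j) = _
  rw [mul_add]

lemma msum_theta (hd : InvData θ) (M : Fin n → Fin n → D) (x y : Fin n → D) :
    θ (msum θ M x y) = msum θ (fun i j => θ (M j i)) y x := by
  unfold msum
  rw [hd.tsum]
  rw [Finset.sum_comm]
  refine Finset.sum_congr rfl fun j _ => ?_
  rw [hd.tsum]
  refine Finset.sum_congr rfl fun i _ => ?_
  rw [hd.hm, hd.hm, hd.hi, mul_assoc]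

lemma msum_add_mat (M N : Fin n → Fin n → D) (x y : Fin n → D) :
    msum θ (fun i j => M i j + N i j) x y = msum θ M x y + msum θ N x y := by
  unfold msum
  rw [← Finset.sum_add_distrib]
  refine Finset.sum_congr rfl fun i _ => ?_
  rw [← Finset.sum_add_distrib]
  refine Finset.sum_congr rfl fun j _ => ?_
  rw [mul_add, add_mul]

lemma msum_alt_diff (hd : InvData θ) (M : Fin n → Fin n → D) (x y : Fin n → D) :
    msum θ M y x - msum θ (fun i j => θ (M j i)) x y ∈ AltSet θ := by
  unfold msum
  have hrw : ∑ i, ∑ j, θ (x i) * θ (M j i) * y j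
      = ∑ i, ∑ j, θ (θ (y j) * M j i * x i) := by
    refine Finset.sum_congr rfl fun i _ => Finset.sum_congr rfl fun j _ => ?_
    rw [hd.hm, hd.hm, hd.hi, mul_assoc]
  rw [hrw]
  rw [show ∑ i, ∑ j, θ (y i) * M i j * x j = ∑ i, ∑ j, θ (y j) * M j i * x i from
    Finset.sum_comm]
  rw [← Finset.sum_sub_distrib]
  refine hd.alt_sum _ _ fun i _ => ?_
  rw [← Finset.sum_sub_distrib]
  exact hd.alt_sum _ _ fun j _ => InvData.alt_sub_theta _

/-- Reducing an `msum` whose matrix is supported on the low block. -/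
lemma msum_low {k m : ℕ} (hkm : k + m = n) (hd : InvData θ) (M : Fin n → Fin n → D)
    (hM : ∀ i j : Fin n, k ≤ i.val ∨ k ≤ j.val → M i j = 0) (x y : Fin n → D) :
    msum θ M x y = ∑ p : Fin k, ∑ r : Fin k,
      θ (x ⟨p.val, by omega⟩) * M ⟨p.val, by omega⟩ ⟨r.val, by omega⟩ * y ⟨r.val, by omega⟩ := by
  unfold msum
  rw [sum_split hkm]
  have hhigh : ∀ j' : Fin m, ∑ j, θ (x ⟨k + j'.val, by omega⟩) * M ⟨k + j'.val, by omega⟩ j * y j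
      = 0 := by
    intro j'
    refine Finset.sum_eq_zero fun j _ => ?_
    rw [hM _ _ (Or.inl (by simp)), mul_zero, zero_mul]
  rw [Finset.sum_congr rfl fun j' _ => hhigh j', Finset.sum_const, smul_zero, add_zero]
  refine Finset.sum_congr rfl fun p _ => ?_
  rw [sum_split hkm (f := fun j => θ (x ⟨p.val, by omega⟩) * M ⟨p.val, by omega⟩ j * y j)]
  have hhigh2 : ∀ j' : Fin m,
      θ (x ⟨p.val, by omega⟩) * M ⟨p.val, by omega⟩ ⟨k + j'.val, by omega⟩ * y ⟨k + j'.val, by omega⟩ = 0 := by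
    intro j'
    rw [hM _ _ (Or.inr (by simp)), mul_zero, zero_mul]
  rw [Finset.sum_congr rfl fun j' _ => hhigh2 j', Finset.sum_const, smul_zero, add_zero]

/-- Reducing an `msum` whose matrix is supported on the high block. -/
lemma msum_high {k m : ℕ} (hkm : k + m = n) (hd : InvData θ) (M : Fin n → Fin n → D)
    (hM : ∀ i j : Fin n, i.val < k ∨ j.val < k → M i j = 0) (x y : Fin n → D) :
    msum θ M x y = ∑ p : Fin m, ∑ r : Fin m,
      θ (x ⟨k + p.val, by omega⟩) * M ⟨k + p.val, by omega⟩ ⟨k + r.val, by omega⟩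
        * y ⟨k + r.val, by omega⟩ := by
  unfold msum
  rw [sum_split hkm]
  have hlow : ∀ j' : Fin k, ∑ j, θ (x ⟨j'.val, by omega⟩) * M ⟨j'.val, by omega⟩ j * y j
      = 0 := by
    intro j'
    refine Finset.sum_eq_zero fun j _ => ?_
    rw [hM _ _ (Or.inl (by simp [j'.isLt])), mul_zero, zero_mul]
  rw [Finset.sum_congr rfl fun j' _ => hlow j', Finset.sum_const, smul_zero, zero_add]
  refine Finset.sum_congr rfl fun p _ => ?_
  rw [sum_split hkm (f := fun j => θ (x ⟨k + p.val, by omega⟩) * M ⟨k + p.val, by omega⟩ j * y j)]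
  have hlow2 : ∀ j' : Fin k,
      θ (x ⟨k + p.val, by omega⟩) * M ⟨k + p.val, by omega⟩ ⟨j'.val, by omega⟩ * y ⟨j'.val, by omega⟩ = 0 := by
    intro j'
    rw [hM _ _ (Or.inr (by simp [j'.isLt])), mul_zero, zero_mul]
  rw [Finset.sum_congr rfl fun j' _ => hlow2 j', Finset.sum_const, smul_zero, zero_add]

end Msum

section Main

variable {D : Type*} [DivisionRing D] {θ : D → D}

theorem herm_to_quad (hd : InvData θ) {n : ℕ}
    (h : (Fin n → D) → (Fin n → D) → D) (hh : IsHermForm θ n h)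
    (han : HermAnisotropic n h) :
    ∃ q h', IsQuadForm θ n q h' ∧ QuadAnisotropic θ n q := by
  classical
  set W := Wsub hd hh with hWdef
  set P := Wperp hd hh with hPdef
  set k := Module.finrank Dᵐᵒᵖ W with hkdef
  set m := Module.finrank Dᵐᵒᵖ P with hmdef
  have hkm : k + m = n := dim_eq hd hh han
  let bW : Module.Basis (Fin k) Dᵐᵒᵖ W := Module.finBasis _ _
  let bP : Module.Basis (Fin m) Dᵐᵒᵖ P := Module.finBasis _ _
  have hmemW : ∀ j : Fin k, h ((bW j : W) : Fin n → D) ((bW j : W) : Fin n → D) ∈ AltSet θ :=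
    fun j => (bW j).2
  have hmemP : ∀ (j : Fin m) (w : Fin n → D), h w w ∈ AltSet θ →
      h w ((bP j : P) : Fin n → D) = 0 := fun j => (bP j).2
  -- the adapted family and the alternating witnesses
  obtain ⟨v, cc, hA, hB, hC⟩ :
      ∃ (v : Fin n → Fin n → D) (cc : Fin n → D),
        (∀ j : Fin k, v ⟨j.val, by omega⟩ = ((bW j : W) : Fin n → D)) ∧
        (∀ j : Fin m, v ⟨k + j.val, by omega⟩ = ((bP j : P) : Fin n → D)) ∧
        (∀ i : Fin n, i.val < k → h (v i) (v i) = cc i - θ (cc i)) := by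
    refine ⟨fun i => if hik : i.val < k then ((bW ⟨i.val, hik⟩ : W) : Fin n → D)
        else ((bP ⟨i.val - k, by omega⟩ : P) : Fin n → D),
      fun i => if hik : i.val < k then Classical.choose (hmemW ⟨i.val, hik⟩) else 0,
      ?_, ?_, ?_⟩
    · intro j
      simp only [Fin.eta, j.isLt, dif_pos]
    · intro j
      have hnk : ¬ ((⟨k + j.val, by omega⟩ : Fin n) : ℕ) < k := by simp
      simp only [dif_neg hnk]
      congr 1
      congr 1
      apply Fin.ext
      simp
    · intro i hik
      simp only [dif_pos hik]
      exact Classical.choose_spec (hmemW ⟨i.val, hik⟩)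
  -- matrices
  set Cm : Fin n → Fin n → D := fun i j =>
    if i.val < k ∧ j.val < k then
      (if i < j then h (v i) (v j) else if i = j then cc i else 0)
    else if k ≤ i.val ∧ k ≤ j.val then h (v i) (v j) else 0 with hCm
  set Pm : Fin n → Fin n → D := fun i j =>
    if i.val < k ∧ j.val < k then h (v i) (v j) else 0 with hPm
  have hθswap : ∀ i j : Fin n, θ (h (v j) (v i)) = h (v i) (v j) := by
    intro i j
    rw [hh.2.2.2 (v i) (v j), hd.hi]
  have hPC : ∀ i j, Pm i j = Cm i j + θ (Cm j i) := by
    intro i j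
    simp only [hPm, hCm]
    by_cases hik : i.val < k <;> by_cases hjk : j.val < k
    · have c1 : (i : ℕ) < k ∧ (j : ℕ) < k := ⟨hik, hjk⟩
      have c2 : (j : ℕ) < k ∧ (i : ℕ) < k := ⟨hjk, hik⟩
      simp only [if_pos c1, if_pos c2]
      rcases lt_trichotomy i j with hij | rfl | hij
      · simp only [if_pos hij, if_neg (lt_asymm hij), if_neg hij.ne', hd.t0, add_zero]
      · rw [if_neg (lt_irrefl i), if_pos (rfl : i = i), hC i hik, hd.sub_eq_add]
      · simp only [if_neg (lt_asymm hij), if_neg hij.ne', if_pos hij, zero_add]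
        rw [hθswap]
    · have c1 : ¬((i : ℕ) < k ∧ (j : ℕ) < k) := by tauto
      have c2 : ¬(k ≤ (i : ℕ) ∧ k ≤ (j : ℕ)) := by omega
      have c3 : ¬((j : ℕ) < k ∧ (i : ℕ) < k) := by tauto
      have c4 : ¬(k ≤ (j : ℕ) ∧ k ≤ (i : ℕ)) := by omega
      simp only [if_neg c1, if_neg c2, if_neg c3, if_neg c4, hd.t0, add_zero]
    · have c1 : ¬((i : ℕ) < k ∧ (j : ℕ) < k) := by tauto
      have c2 : ¬(k ≤ (i : ℕ) ∧ k ≤ (j : ℕ)) := by omega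
      have c3 : ¬((j : ℕ) < k ∧ (i : ℕ) < k) := by tauto
      have c4 : ¬(k ≤ (j : ℕ) ∧ k ≤ (i : ℕ)) := by omega
      simp only [if_neg c1, if_neg c2, if_neg c3, if_neg c4, hd.t0, add_zero]
    · have c1 : ¬((i : ℕ) < k ∧ (j : ℕ) < k) := by tauto
      have c2 : k ≤ (i : ℕ) ∧ k ≤ (j : ℕ) := ⟨by omega, by omega⟩
      have c3 : ¬((j : ℕ) < k ∧ (i : ℕ) < k) := by tauto
      have c4 : k ≤ (j : ℕ) ∧ k ≤ (i : ℕ) := ⟨by omega, by omega⟩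
      simp only [if_neg c1, if_pos c2, if_neg c3, if_pos c4]
      rw [hθswap]
      exact (hd.add_self _).symm
  have hPmsym : ∀ i j, θ (Pm j i) = Pm i j := by
    intro i j
    simp only [hPm]
    by_cases hik : i.val < k <;> by_cases hjk : j.val < k
    · rw [if_pos (show (j : ℕ) < k ∧ (i : ℕ) < k from ⟨hjk, hik⟩),
        if_pos (show (i : ℕ) < k ∧ (j : ℕ) < k from ⟨hik, hjk⟩), hθswap]
    · rw [if_neg (by tauto), if_neg (by tauto), hd.t0]
    · rw [if_neg (by tauto), if_neg (by tauto), hd.t0]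
    · rw [if_neg (by tauto), if_neg (by tauto), hd.t0]
  have hPmfun : (fun i j => θ (Pm j i)) = Pm := funext fun i => funext fun j => hPmsym i j
  have hPCfun : Pm = fun i j => Cm i j + θ (Cm j i) :=
    funext fun i => funext fun j => hPC i j
  have hPmeq : ∀ x y : Fin n → D,
      msum θ Pm x y = msum θ Cm x y + msum θ (fun i j => θ (Cm j i)) x y := by
    intro x y
    rw [← msum_add_mat]
    conv_lhs => rw [hPCfun]
  refine ⟨fun x => msum θ Cm x x, fun x y => msum θ Pm x y,
    ⟨⟨fun x x' y => msum_addl hd Pm x x' y,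
      fun x y y' => msum_addr Pm x y y',
      fun x y d₁ d₂ => msum_smul hd Pm x y d₁ d₂,
      fun x y => ?_⟩, fun x d => ?_, fun x y => ?_⟩, ?_⟩
  · -- symmetry of the polar form
    rw [msum_theta hd, hPmfun]
  · -- scalar behaviour of q
    show msum θ Cm (rsmul x d) (rsmul x d) - θ d * msum θ Cm x x * d ∈ AltSet θ
    rw [msum_smul hd, sub_self]
    exact hd.alt_zero
  · -- polar identity
    show msum θ Cm (x + y) (x + y) - msum θ Cm x x - msum θ Cm y y - msum θ Pm x y ∈ AltSet θ
    have hq : msum θ Cm (x + y) (x + y)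
        = msum θ Cm x x + msum θ Cm y y + (msum θ Cm x y + msum θ Cm y x) := by
      rw [msum_addl hd, msum_addr, msum_addr]
      abel
    have key : msum θ Cm (x + y) (x + y) - msum θ Cm x x - msum θ Cm y y - msum θ Pm x y
        = msum θ Cm y x - msum θ (fun i j => θ (Cm j i)) x y := by
      rw [hq, hPmeq x y]
      abel
    rw [key]
    exact msum_alt_diff hd Cm x y
  · -- anisotropy
    intro x hx0 hqx
    have hq_sym : θ (msum θ Cm x x) = msum θ Cm x x := hd.theta_of_alt hqx
    have hsum0 : msum θ Pm x x = 0 := by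
      rw [hPmeq x x, ← msum_theta hd Cm x x, hq_sym]
      exact hd.add_self _
    have hPmlow : ∀ i j : Fin n, k ≤ i.val ∨ k ≤ j.val → Pm i j = 0 := by
      intro i j hij
      simp only [hPm]
      rw [if_neg (by omega)]
    have hPmval : ∀ p r : Fin k, Pm ⟨p.val, by omega⟩ ⟨r.val, by omega⟩
        = h ((bW p : W) : Fin n → D) ((bW r : W) : Fin n → D) := by
      intro p r
      simp only [hPm]
      rw [if_pos (show ((⟨p.val, by omega⟩ : Fin n) : ℕ) < k
          ∧ ((⟨r.val, by omega⟩ : Fin n) : ℕ) < k from ⟨p.isLt, r.isLt⟩), hA p, hA r]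
    set xs : Fin n → D :=
      ∑ j : Fin k, rsmul ((bW j : W) : Fin n → D) (x ⟨j.val, by omega⟩) with hxsdef
    have hxs : h xs xs = msum θ Pm x x := by
      rw [hxsdef, h_sum_pair hd hh, msum_low hkm hd Pm hPmlow x x]
      refine Finset.sum_congr rfl fun p _ => Finset.sum_congr rfl fun r _ => ?_
      rw [hPmval p r]
    have hxs0 : xs = 0 := han _ (by rw [hxs, hsum0])
    have hlowc : ∀ j : Fin k, x ⟨j.val, by omega⟩ = 0 :=
      indep_of_basis W bW _ (by rw [← hxsdef]; exact hxs0)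
    have hlow : ∀ i : Fin n, i.val < k → x i = 0 := by
      intro i hik
      have := hlowc ⟨i.val, hik⟩
      simpa using this
    -- reduction to the high block
    set xh : Fin n → D :=
      ∑ j : Fin m, rsmul ((bP j : P) : Fin n → D) (x ⟨k + j.val, by omega⟩) with hxhdef
    set Cm' : Fin n → Fin n → D :=
      fun i j => if i.val < k ∨ j.val < k then 0 else Cm i j with hCm'
    have hqhigh : msum θ Cm x x = h xh xh := by
      have hCmx : msum θ Cm x x = msum θ Cm' x x := by
        unfold msum
        refine Finset.sum_congr rfl fun i _ => Finset.sum_congr rfl fun j _ => ?_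
        by_cases hik : i.val < k
        · simp [hlow i hik, hd.t0]
        · by_cases hjk : j.val < k
          · simp [hlow j hjk]
          · simp only [hCm']
            rw [if_neg (by tauto)]
      have hCm'high : ∀ i j : Fin n, i.val < k ∨ j.val < k → Cm' i j = 0 := by
        intro i j hij
        simp only [hCm']
        rw [if_pos hij]
      rw [hCmx, msum_high hkm hd Cm' hCm'high x x, hxhdef, h_sum_pair hd hh]
      refine Finset.sum_congr rfl fun p _ => Finset.sum_congr rfl fun r _ => ?_
      have hp := p.isLt
      have hr := r.isLt
      have e1 : Cm' ⟨k + p.val, by omega⟩ ⟨k + r.val, by omega⟩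
          = h ((bP p : P) : Fin n → D) ((bP r : P) : Fin n → D) := by
        have d1 : ¬((⟨k + p.val, by omega⟩ : Fin n).val < k
            ∨ (⟨k + r.val, by omega⟩ : Fin n).val < k) := by
          simp only [Fin.val_mk]
          omega
        have d2 : ¬((⟨k + p.val, by omega⟩ : Fin n).val < k
            ∧ (⟨k + r.val, by omega⟩ : Fin n).val < k) := by
          simp only [Fin.val_mk]
          omega
        have d3 : k ≤ (⟨k + p.val, by omega⟩ : Fin n).val
            ∧ k ≤ (⟨k + r.val, by omega⟩ : Fin n).val := by
          simp only [Fin.val_mk]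
          omega
        simp only [hCm', hCm]
        rw [if_neg d1, if_neg d2, if_pos d3, hB p, hB r]
      rw [e1]
    have hPcond : ∀ w, h w w ∈ AltSet θ → h w xh = 0 := by
      intro w hw
      rw [hxhdef, hsumr hh]
      refine Finset.sum_eq_zero fun j _ => ?_
      rw [hsr hd hh, hmemP j w hw, zero_mul]
    have hxhW : h xh xh ∈ AltSet θ := by
      rw [← hqhigh]
      exact hqx
    have hxh0 : xh = 0 := han _ (hPcond _ hxhW)
    have hhighc : ∀ j : Fin m, x ⟨k + j.val, by omega⟩ = 0 :=
      indep_of_basis P bP _ (by rw [← hxhdef]; exact hxh0)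
    apply hx0
    funext i
    by_cases hik : i.val < k
    · exact hlow i hik
    · have hval := hhighc ⟨i.val - k, by omega⟩
      have he : (⟨k + ((⟨i.val - k, by omega⟩ : Fin m) : ℕ), by omega⟩ : Fin n) = i :=
        Fin.ext (by simp; omega)
      rw [he] at hval
      exact hval

end Main
/-- `u⁺(D) ≤ u(D)`. -/
theorem stmt5 {F D : Type*} [Field F] [CharP F 2] [DivisionRing D] [Algebra F D]
    [FiniteDimensional F D] [Algebra.IsCentral F D]
    (θ : D → D) (hθ : IsFInvolution F θ) :
    uHermPlus θ ≤ uQuad θ := by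
  have h2 : (2 : D) = 0 := by
    have hF : (2 : F) = 0 := by
      have := CharP.cast_eq_zero F 2
      simpa using this
    rw [show (2 : D) = algebraMap F D 2 from (map_ofNat _ 2).symm, hF, map_zero]
  have hd : InvData θ := ⟨hθ.1, hθ.2.2.1, hθ.2.2.2, h2⟩
  unfold uHermPlus uQuad
  refine biSup_mono ?_
  rintro n ⟨h, hh, han⟩
  exact herm_to_quad hd h hh han

end GenQuadForm
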